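/- arXiv:1611.07287 — 5 statements merged into one kernel-verified Lean document; each statement's English description precedes it below -/
import Mathlib

section
/- For every nonzero complex number z, |z − 1| ≥ |z|^{1/2} · | z/|z| − 1 |. -/
/-- For every nonzero complex z, `|z − 1| ≥ |z|^{1/2} · |z/|z| − 1|`. -/
theorem stmt_7 (z : ℂ) (hz : z ≠ 0) :
    Real.sqrt ‖z‖ * ‖z / (‖z‖ : ℂ) - 1‖ ≤
      ‖z - 1‖ := by
  set r := ‖z‖ with hr_def
  have hr : 0 < r := norm_pos_iff.mpr hz
  have hrne : (r : ℂ) ≠ 0 := by exact_mod_cast hr.ne'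
  have hsq : z.re ^ 2 + z.im ^ 2 = r ^ 2 := by
    rw [hr_def, Complex.sq_norm, Complex.normSq_apply]; ring
  have hA : ‖z - 1‖ ^ 2 = r ^ 2 - 2 * z.re + 1 := by
    rw [Complex.sq_norm, Complex.normSq_apply]
    simp only [Complex.sub_re, Complex.sub_im, Complex.one_re, Complex.one_im]
    nlinarith [hsq]
  have hB : ‖z / (r : ℂ) - 1‖ ^ 2 = 2 - 2 * z.re / r := by
    rw [Complex.sq_norm, Complex.normSq_apply]
    simp only [Complex.sub_re, Complex.sub_im, Complex.one_re, Complex.one_im,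
      Complex.div_re, Complex.div_im, Complex.ofReal_re, Complex.ofReal_im,
      Complex.normSq_apply]
    field_simp
    nlinarith [hsq]
  have key : r * ‖z / (r : ℂ) - 1‖ ^ 2 ≤ ‖z - 1‖ ^ 2 := by
    rw [hA, hB]
    have : r * (2 - 2 * z.re / r) = 2 * r - 2 * z.re := by field_simp
    rw [this]
    nlinarith [sq_nonneg (r - 1)]
  have h1 : Real.sqrt r * ‖z / (r : ℂ) - 1‖
      = Real.sqrt (r * ‖z / (r : ℂ) - 1‖ ^ 2) := by
    rw [Real.sqrt_mul hr.le, Real.sqrt_sq (norm_nonneg _)]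
  rw [h1]
  calc Real.sqrt (r * ‖z / (r : ℂ) - 1‖ ^ 2)
      ≤ Real.sqrt (‖z - 1‖ ^ 2) := Real.sqrt_le_sqrt key
    _ = ‖z - 1‖ := Real.sqrt_sq (norm_nonneg _)
end

section
/- Let α = r·e^{2πiϑ} with r ∈ (0,1] and ϑ ∈ [0,1), and let p ≥ 2 be an integer with |α^p − 1| ≤ 1/2. Then there exists t ∈ {0,…,p} such that |ϑ − t/p| ≤ (1/(4√2))·|α^p − 1|. -/
set_option maxHeartbeats 1000000

/-- Let α = r·e^{2πiϑ} with r ∈ (0,1], ϑ ∈ [0,1), and p ≥ 2 an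
integer with |α^p − 1| ≤ 1/2. Then there is t ∈ {0,…,p} with
|ϑ − t/p| ≤ (1/(4√2))·|α^p − 1|. -/
theorem stmt_8 (r ϑ : ℝ) (hr0 : 0 < r) (hr1 : r ≤ 1) (hϑ0 : 0 ≤ ϑ) (hϑ1 : ϑ < 1)
    (α : ℂ) (hα : α = (r : ℂ) * Complex.exp (2 * Real.pi * Complex.I * ϑ))
    (p : ℕ) (hp : 2 ≤ p) (hsmall : ‖α ^ p - 1‖ ≤ 1 / 2) :
    ∃ t : ℕ, t ≤ p ∧
      |ϑ - (t : ℝ) / p| ≤ (1 / (4 * Real.sqrt 2)) * ‖α ^ p - 1‖ := by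
  set E := ‖α ^ p - 1‖ with hE
  have hEnn : 0 ≤ E := norm_nonneg _
  set R : ℝ := r ^ p with hRdef
  set y : ℝ := Real.pi * p * ϑ with hy
  have hR0 : 0 < R := pow_pos hr0 p
  -- α^p = R * exp((2*y) * I)
  have harg : (p : ℂ) * (2 * Real.pi * Complex.I * ϑ) = ((2 * y : ℝ) : ℂ) * Complex.I := by
    rw [hy]; push_cast; ring
  have hαp : α ^ p = (R : ℂ) * Complex.exp ((2 * y : ℝ) * Complex.I) := by
    rw [hα, mul_pow, ← Complex.exp_nat_mul, harg, hRdef]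
    norm_cast
  -- E^2 = (R cos 2y - 1)^2 + (R sin 2y)^2
  have hsplit : α ^ p - 1 =
      ((R * Real.cos (2 * y) - 1 : ℝ) : ℂ) + ((R * Real.sin (2 * y) : ℝ) : ℂ) * Complex.I := by
    rw [hαp, Complex.exp_mul_I]
    push_cast; ring
  have hE2 : E ^ 2 = (R * Real.cos (2 * y) - 1) ^ 2 + (R * Real.sin (2 * y)) ^ 2 := by
    rw [hE, Complex.sq_norm, hsplit, Complex.normSq_add_mul_I]
  -- R ≥ 1/2
  have hA : ‖α ^ p‖ = R := by
    rw [hαp, norm_mul, Complex.norm_exp]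
    simp [abs_of_pos hR0]
  have hRhalf : 1 / 2 ≤ R := by
    have h := abs_norm_sub_norm_le (α ^ p) 1
    rw [hA, norm_one] at h
    rw [← hE] at h
    have := abs_le.mp (h.trans hsmall)
    linarith
  -- 2 sin² y ≤ E²
  have hsin : 2 * Real.sin y ^ 2 ≤ E ^ 2 := by
    have hide : (R * Real.cos (2 * y)) ^ 2 + (R * Real.sin (2 * y)) ^ 2 = R ^ 2 := by
      have := Real.sin_sq_add_cos_sq (2 * y)
      nlinarith
    have hE2' : E ^ 2 = R ^ 2 - 2 * R * Real.cos (2 * y) + 1 := by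
      linear_combination hE2 + hide
    have h1 := Real.cos_two_mul y
    have h2 := Real.sin_sq_add_cos_sq y
    nlinarith [sq_nonneg (R - 1),
      mul_nonneg (sq_nonneg (Real.sin y)) (by linarith : (0:ℝ) ≤ 2 * R - 1)]
  -- x = p ϑ, n = round x
  set x : ℝ := p * ϑ with hx
  have hx0 : 0 ≤ x := by positivity
  have hp0 : (0 : ℝ) < p := by positivity
  have hxp : x < p := by
    calc x = (p : ℝ) * ϑ := rfl
    _ < p * 1 := mul_lt_mul_of_pos_left hϑ1 hp0
    _ = p := by ring
  set n : ℤ := round x with hn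
  have hn0 : 0 ≤ n := by
    rw [hn, round_eq]
    exact Int.floor_nonneg.mpr (by linarith)
  have hnpR : (n : ℝ) ≤ p := by
    have h1 : (n : ℝ) ≤ x + 1 / 2 := by
      rw [hn, round_eq]
      have := Int.floor_le (x + 1 / 2)
      linarith
    have h2 : n < (p : ℤ) + 1 := by
      have : (n : ℝ) < (p : ℝ) + 1 := by linarith
      exact_mod_cast this
    exact_mod_cast Int.lt_add_one_iff.mp h2
  set δ : ℝ := x - n with hδ
  have hδhalf : |δ| ≤ 1 / 2 := by
    rw [hδ, hn]; exact abs_sub_round x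
  -- |sin y| = |sin (π δ)|
  have hysin : |Real.sin y| = |Real.sin (Real.pi * δ)| := by
    have hyeq : y = Real.pi * δ + n * Real.pi := by rw [hδ, hy, hx]; push_cast; ring
    rw [hyeq, Real.sin_add_int_mul_pi, abs_mul]
    have : |((-1 : ℝ)) ^ n| = 1 := by
      rcases Int.even_or_odd n with h | h
      · rw [h.neg_one_zpow]; norm_num
      · rw [Odd.neg_one_zpow h]; norm_num
    rw [this, one_mul]
  -- |sin(π δ)| = sin(π |δ|)
  have hodd : |Real.sin (Real.pi * δ)| = Real.sin (Real.pi * |δ|) := by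
    obtain ⟨hd1, hd2⟩ := abs_le.mp hδhalf
    rcases le_or_gt 0 δ with h | h
    · rw [abs_of_nonneg h]
      apply abs_of_nonneg
      have h1 : (0:ℝ) ≤ Real.pi * δ := by nlinarith [Real.pi_pos]
      have h2 : Real.pi * δ ≤ Real.pi := by nlinarith [Real.pi_pos]
      exact Real.sin_nonneg_of_nonneg_of_le_pi h1 h2
    · have hsneg : Real.sin (Real.pi * δ) ≤ 0 := by
        rw [show Real.pi * δ = -(Real.pi * -δ) by ring, Real.sin_neg, neg_nonpos]
        have h1 : (0:ℝ) ≤ Real.pi * -δ := by nlinarith [Real.pi_pos]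
        have h2 : Real.pi * -δ ≤ Real.pi := by nlinarith [Real.pi_pos]
        exact Real.sin_nonneg_of_nonneg_of_le_pi h1 h2
      rw [abs_of_neg h, abs_of_nonpos hsneg,
        show Real.pi * -δ = -(Real.pi * δ) by ring, Real.sin_neg]
  -- 2|δ| ≤ |sin(π δ)|
  have hlow : 2 * |δ| ≤ |Real.sin (Real.pi * δ)| := by
    rw [hodd]
    have hms := Real.mul_le_sin (x := Real.pi * |δ|) (by positivity)
      (by nlinarith [Real.pi_pos, hδhalf])
    have heq : 2 / Real.pi * (Real.pi * |δ|) = 2 * |δ| := by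
      field_simp
    linarith [heq ▸ hms]
  -- conclude: 8 δ² ≤ E²
  have hδ2 : 8 * δ ^ 2 ≤ E ^ 2 := by
    have h1 : 2 * |δ| ≤ |Real.sin y| := by rw [hysin]; exact hlow
    nlinarith [hsin, sq_abs δ, sq_abs (Real.sin y), abs_nonneg δ, abs_nonneg (Real.sin y),
      mul_self_le_mul_self (by positivity : (0:ℝ) ≤ 2 * |δ|) h1]
  set s : ℝ := Real.sqrt 2 with hs
  have hs2 : s ^ 2 = 2 := Real.sq_sqrt (by norm_num)
  have hs0 : 0 < s := Real.sqrt_pos.mpr (by norm_num)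
  have hδle : |δ| ≤ s / 4 * E := by
    have h1 : δ ^ 2 ≤ (s / 4 * E) ^ 2 := by nlinarith
    have h2 := Real.sqrt_le_sqrt h1
    have hnn : (0:ℝ) ≤ s / 4 * E := mul_nonneg (div_nonneg hs0.le (by norm_num)) hEnn
    rwa [Real.sqrt_sq_eq_abs, Real.sqrt_sq_eq_abs, abs_of_nonneg hnn] at h2
  refine ⟨n.toNat, ?_, ?_⟩
  · exact Int.toNat_le.mpr (by exact_mod_cast hnpR)
  · have htn : ((n.toNat : ℕ) : ℝ) = (n : ℝ) := by
      rw [← Int.cast_natCast, Int.toNat_of_nonneg hn0]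
    have heq : ϑ - (n.toNat : ℝ) / p = δ / p := by
      rw [htn, hδ, hx]; field_simp
    rw [heq, abs_div, abs_of_pos hp0]
    have h1 : |δ| / p ≤ |δ| / 2 := by
      gcongr
      exact_mod_cast hp
    have h2 : |δ| / 2 ≤ 1 / (4 * s) * E := by
      have hss : 1 / (4 * s) = s / 8 := by
        rw [div_eq_div_iff (by positivity) (by norm_num : (8:ℝ) ≠ 0)]
        nlinarith
      rw [hss]
      linarith
    linarith
end

section
/- Let α = r·e^{2πiϑ} with r ∈ (0,1], ϑ ∈ [0,1), let p ≥ 2 be an integer with |α^p − 1| ≤ 1/2, let a = (a₁,…,aₙ) ∈ ℤⁿ, and set P_a(X) = 1 + X^{a₁} + ⋯ + X^{aₙ}. If P_a(α) = 0, then there exists t ∈ {0,…,p} such that |P_a(e^{2πit/p})| ≤ 5·n·|a|·|α^p − 1|, where |a| = max_i |a_i|. -/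
open Finset


lemma aux1 (x : ℝ) : ‖Complex.exp (x * Complex.I) - 1‖ = 2 * |Real.sin (x / 2)| := by
  rw [Complex.exp_mul_I, ← Complex.ofReal_cos, ← Complex.ofReal_sin]
  have h1 : (Real.cos x : ℂ) + (Real.sin x : ℂ) * Complex.I - 1
      = ((Real.cos x - 1 : ℝ) : ℂ) + ((Real.sin x : ℝ) : ℂ) * Complex.I := by push_cast; ring
  rw [h1, Complex.norm_add_mul_I]
  have h2 : (Real.cos x - 1)^2 + (Real.sin x)^2 = (2 * |Real.sin (x/2)|)^2 := by
    have h0 : Real.sin (x/2)^2 = 1/2 - Real.cos x / 2 := by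
      have := Real.sin_sq_eq_half_sub (x/2); rw [show 2*(x/2) = x by ring] at this; exact this
    have := Real.sin_sq_add_cos_sq x
    rw [mul_pow, sq_abs]
    nlinarith
  rw [h2, Real.sqrt_sq (by positivity)]

lemma aux2 (x y : ℝ) : ‖Complex.exp (x * Complex.I) - Complex.exp (y * Complex.I)‖ ≤ |x - y| := by
  have h : Complex.exp (x * Complex.I) - Complex.exp (y * Complex.I)
      = Complex.exp (y * Complex.I) * (Complex.exp (((x - y : ℝ)) * Complex.I) - 1) := by
    rw [mul_sub, ← Complex.exp_add, mul_one]; push_cast; ring_nf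
  rw [h, norm_mul, Complex.norm_exp_ofReal_mul_I, one_mul, aux1]
  calc 2 * |Real.sin ((x - y) / 2)| ≤ 2 * |(x - y) / 2| :=
        mul_le_mul_of_nonneg_left (Real.abs_sin_le_abs) (by norm_num)
    _ = |x - y| := by rw [abs_div, abs_two]; ring

lemma aux3 (x y : ℂ) (hx : ‖x‖ ≤ 1) (hy : ‖y‖ ≤ 1) (k : ℕ) :
    ‖x ^ k - y ^ k‖ ≤ k * ‖x - y‖ := by
  rw [← geom_sum₂_mul, norm_mul]
  refine mul_le_mul_of_nonneg_right ?_ (norm_nonneg _) |>.trans_eq rfl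
  calc ‖∑ i ∈ range k, x ^ i * y ^ (k - 1 - i)‖
      ≤ ∑ i ∈ range k, ‖x ^ i * y ^ (k - 1 - i)‖ := norm_sum_le _ _
    _ ≤ ∑ _i ∈ range k, 1 := by
        refine Finset.sum_le_sum fun i _ => ?_
        rw [norm_mul, norm_pow, norm_pow]
        exact mul_le_one₀ (pow_le_one₀ (norm_nonneg _) hx) (by positivity)
          (pow_le_one₀ (norm_nonneg _) hy)
    _ = k := by simp

set_option maxHeartbeats 1000000 in
/-- Let α = r·e^{2πiϑ}, r ∈ (0,1], ϑ ∈ [0,1), p ≥ 2 with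
|α^p − 1| ≤ 1/2, and a ∈ ℤⁿ with `P_a(α) = 1 + α^{a₁} + ⋯ + α^{aₙ} = 0`. Then
there is t ∈ {0,…,p} with `|P_a(e^{2πit/p})| ≤ 5·n·|a|·|α^p − 1|`, where
|a| = maxᵢ |aᵢ|. -/
theorem stmt_9 {n : ℕ} (a : Fin n → ℤ)
    (r ϑ : ℝ) (hr0 : 0 < r) (hr1 : r ≤ 1) (hϑ0 : 0 ≤ ϑ) (hϑ1 : ϑ < 1)
    (α : ℂ) (hα : α = (r : ℂ) * Complex.exp (2 * Real.pi * Complex.I * ϑ))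
    (p : ℕ) (hp : 2 ≤ p) (hsmall : ‖α ^ p - 1‖ ≤ 1 / 2)
    (hroot : 1 + ∑ i : Fin n, α ^ (a i) = 0) :
    ∃ t : ℕ, t ≤ p ∧
      ‖1 + ∑ i : Fin n,
          Complex.exp (2 * Real.pi * Complex.I * t / p) ^ (a i)‖ ≤
        5 * n * ((Finset.univ.sup fun i => (a i).natAbs : ℕ) : ℝ) *
          ‖α ^ p - 1‖ := by
  have hπ := Real.pi_pos
  have hn : 0 < n := by
    rcases Nat.eq_zero_or_pos n with h | h
    · subst h; simp at hroot
    · exact h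
  set A : ℕ := Finset.univ.sup fun i => (a i).natAbs with hAdef
  set δ : ℝ := ‖α ^ p - 1‖ with hδdef
  have hδ0 : 0 ≤ δ := norm_nonneg _
  have hai : ∀ i, |a i| ≤ (A : ℤ) := by
    intro i
    have := Finset.le_sup (f := fun i => (a i).natAbs) (Finset.mem_univ i)
    rw [Int.abs_eq_natAbs]; exact_mod_cast this
  -- basic facts about α
  have hexp : (2 * (Real.pi : ℂ) * Complex.I * (ϑ : ℂ)) = ((2*Real.pi*ϑ : ℝ) : ℂ) * Complex.I := by
    push_cast; ring
  have hαu : α = (r : ℂ) * Complex.exp (((2*Real.pi*ϑ : ℝ) : ℂ) * Complex.I) := by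
    rw [hα, hexp]
  have habs : ‖α‖ = r := by
    rw [hαu, norm_mul, Complex.norm_real, Real.norm_eq_abs, abs_of_pos hr0, Complex.norm_exp_ofReal_mul_I, mul_one]
  have hα0 : α ≠ 0 := by
    intro h; rw [h, norm_zero] at habs; exact absurd habs.symm (ne_of_gt hr0)
  have habsp : ‖α ^ p‖ = r ^ p := by rw [norm_pow, habs]
  have h1rp : 1 - r ^ p ≤ δ := by
    have t1 : ‖(1:ℂ)‖ ≤ ‖1 - α ^ p‖ + ‖α ^ p‖ := by
      have := norm_add_le (1 - α ^ p) (α ^ p)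
      simpa using this
    rw [norm_one] at t1
    rw [norm_sub_rev] at t1
    rw [habsp] at t1
    linarith [t1]
  have hrp2 : (1:ℝ)/2 ≤ r ^ p := by linarith
  -- 1 - r ≤ 2δ/p
  have hp0 : 0 < p := by omega
  have hpR : (2:ℝ) ≤ (p:ℝ) := by exact_mod_cast hp
  have hgeom : (1 - r) * ∑ k ∈ range p, r ^ k = 1 - r ^ p := by
    have h := geom_sum_mul r p
    linear_combination -h
  have hsum : (p:ℝ) * r ^ p ≤ ∑ k ∈ range p, r ^ k := by
    calc (p:ℝ) * r ^ p = ∑ _k ∈ range p, r ^ p := by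
          rw [Finset.sum_const, card_range, nsmul_eq_mul]
      _ ≤ ∑ k ∈ range p, r ^ k := Finset.sum_le_sum fun k hk =>
          pow_le_pow_of_le_one hr0.le hr1 (Finset.mem_range.1 hk).le
  have h1r : (p:ℝ) * (1 - r) ≤ 2 * δ := by
    have h2 : (1 - r) * ((p:ℝ) * r ^ p) ≤ (1 - r) * ∑ k ∈ range p, r ^ k :=
      mul_le_mul_of_nonneg_left hsum (by linarith)
    nlinarith [h2, hgeom, h1rp, hrp2]
  set t' : ℤ := round ((p:ℝ) * ϑ) with ht'def
  set d : ℝ := (p:ℝ) * ϑ - t' with hddef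
  have hd : |d| ≤ 1/2 := by
    rw [hddef]; exact abs_sub_round ((p:ℝ) * ϑ)
  have ht'0 : 0 ≤ t' := by
    rw [ht'def, round_eq]
    exact Int.floor_nonneg.2 (by positivity)
  have ht'p : t' ≤ (p : ℤ) := by
    have h2 : (t' : ℝ) ≤ (p:ℝ) * ϑ + 1/2 := by
      have := abs_le.1 hd
      rw [hddef] at this
      linarith [this.1]
    have h3 : (t' : ℝ) < (p:ℝ) + 1 := by nlinarith
    have h4 : (t' : ℝ) < ((p : ℤ) : ℝ) + 1 := by push_cast; linarith
    exact_mod_cast Int.lt_add_one_iff.1 (by exact_mod_cast h4)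
  set t : ℕ := t'.toNat with htdef
  have htt' : (t : ℤ) = t' := Int.toNat_of_nonneg ht'0
  have htp : t ≤ p := by omega
  refine ⟨t, htp, ?_⟩
  set ξ : ℂ := Complex.exp (2 * Real.pi * Complex.I * t / p) with hξdef
  have hξform : ξ = Complex.exp (((2*Real.pi*t/p : ℝ) : ℂ) * Complex.I) := by
    rw [hξdef]; congr 1; push_cast; ring
  have habsξ : ‖ξ‖ = 1 := by rw [hξform, Complex.norm_exp_ofReal_mul_I]
  have hξ0 : ξ ≠ 0 := by rw [hξdef]; exact Complex.exp_ne_zero _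
  -- w = u^p
  set w : ℂ := Complex.exp (((2*Real.pi*((p:ℝ)*ϑ) : ℝ) : ℂ) * Complex.I) with hwdef
  have hup : Complex.exp (((2*Real.pi*ϑ : ℝ) : ℂ) * Complex.I) ^ p = w := by
    rw [hwdef, ← Complex.exp_nat_mul]; congr 1; push_cast; ring
  have habsw : ‖w‖ = 1 := by rw [hwdef, Complex.norm_exp_ofReal_mul_I]
  have hαp : α ^ p = ((r ^ p : ℝ) : ℂ) * w := by
    rw [hαu, mul_pow, hup]; push_cast; ring
  have hw1 : w = Complex.exp (((2*Real.pi*d : ℝ) : ℂ) * Complex.I) := by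
    rw [hwdef, show (((2*Real.pi*((p:ℝ)*ϑ) : ℝ) : ℂ) * Complex.I)
        = ((2*Real.pi*d : ℝ) : ℂ) * Complex.I + (t' : ℂ) * (2 * Real.pi * Complex.I) by
      push_cast [hddef]; ring]
    rw [Complex.exp_add, Complex.exp_int_mul_two_pi_mul_I, mul_one]
  have hw2δ : ‖w - 1‖ ≤ 2 * δ := by
    have e1 : ‖w - α ^ p‖ ≤ δ := by
      rw [hαp, show w - ((r ^ p : ℝ) : ℂ) * w = ((1 - r ^ p : ℝ) : ℂ) * w by push_cast; ring,
        norm_mul, habsw, mul_one, Complex.norm_real, Real.norm_eq_abs, abs_of_nonneg (by have := pow_le_one₀ hr0.le hr1 (n := p); linarith)]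
      exact h1rp
    calc ‖w - 1‖ ≤ ‖w - α ^ p‖ + ‖α ^ p - 1‖ := by
          have := norm_add_le (w - α ^ p) (α ^ p - 1)
          simpa using this
      _ ≤ 2 * δ := by rw [← hδdef]; linarith
  have hsin : |Real.sin (Real.pi * d)| ≤ δ := by
    have := hw2δ
    rw [hw1, aux1, show (2*Real.pi*d)/2 = Real.pi * d by ring] at this
    linarith
  -- s = π|d| ≤ (4/3) δ
  set s : ℝ := Real.pi * |d| with hsdef
  have hs0 : 0 ≤ s := by positivity
  have hsinabs : Real.sin s ≤ δ := by
    rcases abs_cases d with ⟨h, _⟩ | ⟨h, _⟩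
    · rw [hsdef, h]; exact le_trans (le_abs_self _) hsin
    · rw [hsdef, h, show Real.pi * -d = -(Real.pi * d) by ring, Real.sin_neg]
      have h2 := neg_le_abs (Real.sin (Real.pi * d))
      linarith
  have hs2 : s ≤ Real.pi / 2 := by
    have := mul_le_mul_of_nonneg_left hd hπ.le
    rw [hsdef]; linarith
  have hs6 : s ≤ Real.pi / 6 := by
    by_contra hcon
    push_neg at hcon
    have := Real.sin_lt_sin_of_lt_of_le_pi_div_two (by linarith : -(Real.pi/2) ≤ Real.pi/6) hs2 hcon
    rw [Real.sin_pi_div_six] at this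
    linarith
  have hs1 : s ≤ 1 := by linarith [Real.pi_le_four]
  have hsδ : s ≤ 4/3 * δ := by
    rcases eq_or_lt_of_le hs0 with h | h
    · linarith
    · have hcube := Real.sin_gt_sub_cube h
      have h1 : (0:ℝ) ≤ (1-s)*(1+s) := mul_nonneg (by linarith) (by linarith)
      have h2 : (0:ℝ) ≤ s*((1-s)*(1+s)) := mul_nonneg hs0 h1
      have hcub : s^3 ≤ s := by nlinarith [h2]
      linarith [hcube, hsinabs, hcub]
  -- chord bound: |ξ - α| ≤ (7/3) δ
  set D : ℝ := ‖ξ - α‖ with hDdef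
  have hD0 : 0 ≤ D := norm_nonneg _
  have hchord1 : ‖(r:ℂ) * Complex.exp (((2*Real.pi*ϑ : ℝ) : ℂ) * Complex.I)
      - Complex.exp (((2*Real.pi*ϑ : ℝ) : ℂ) * Complex.I)‖ = 1 - r := by
    rw [show (r:ℂ) * Complex.exp (((2*Real.pi*ϑ : ℝ) : ℂ) * Complex.I)
        - Complex.exp (((2*Real.pi*ϑ : ℝ) : ℂ) * Complex.I)
        = ((r - 1 : ℝ) : ℂ) * Complex.exp (((2*Real.pi*ϑ : ℝ) : ℂ) * Complex.I) by push_cast; ring,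
      norm_mul, Complex.norm_real, Real.norm_eq_abs, Complex.norm_exp_ofReal_mul_I, mul_one, abs_of_nonpos (by linarith)]
    ring
  have hchord2 : (p:ℝ) * ‖Complex.exp (((2*Real.pi*ϑ : ℝ) : ℂ) * Complex.I) - ξ‖
      ≤ 2 * s := by
    have h1 := aux2 (2*Real.pi*ϑ) (2*Real.pi*t/p)
    rw [← hξform] at h1
    have h2 : 2*Real.pi*ϑ - 2*Real.pi*t/p = 2*Real.pi*d/p := by
      rw [hddef]
      have : (t:ℝ) = (t':ℝ) := by exact_mod_cast htt'
      field_simp [this]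
      rw [this]
    rw [h2] at h1
    have h3 : |2*Real.pi*d/p| = 2*s/p := by
      rw [show 2*Real.pi*d/p = (2*Real.pi/p)*d by ring, abs_mul,
        abs_of_pos (by positivity : (0:ℝ) < 2*Real.pi/p), hsdef]
      ring
    rw [h3] at h1
    have hppos : (0:ℝ) < p := by linarith
    calc (p:ℝ) * ‖Complex.exp (((2*Real.pi*ϑ : ℝ) : ℂ) * Complex.I) - ξ‖
        ≤ (p:ℝ) * (2*s/p) := mul_le_mul_of_nonneg_left h1 (by linarith)
      _ = 2 * s := by field_simp
  have hD : D ≤ 7/3 * δ := by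
    have htri : D ≤ (1 - r) + ‖Complex.exp (((2*Real.pi*ϑ : ℝ) : ℂ) * Complex.I) - ξ‖ := by
      rw [hDdef, norm_sub_rev, hαu]
      calc ‖(r:ℂ) * Complex.exp (((2*Real.pi*ϑ : ℝ) : ℂ) * Complex.I) - ξ‖
          ≤ ‖(r:ℂ) * Complex.exp (((2*Real.pi*ϑ : ℝ) : ℂ) * Complex.I)
              - Complex.exp (((2*Real.pi*ϑ : ℝ) : ℂ) * Complex.I)‖
            + ‖Complex.exp (((2*Real.pi*ϑ : ℝ) : ℂ) * Complex.I) - ξ‖ := by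
            have := norm_add_le ((r:ℂ) * Complex.exp (((2*Real.pi*ϑ : ℝ) : ℂ) * Complex.I)
              - Complex.exp (((2*Real.pi*ϑ : ℝ) : ℂ) * Complex.I))
              (Complex.exp (((2*Real.pi*ϑ : ℝ) : ℂ) * Complex.I) - ξ)
            simpa using this
        _ = (1 - r) + ‖Complex.exp (((2*Real.pi*ϑ : ℝ) : ℂ) * Complex.I) - ξ‖ := by
            rw [hchord1]
    have hpd : (p:ℝ) * D ≤ (p:ℝ) * (1-r) + (p:ℝ) * ‖Complex.exp (((2*Real.pi*ϑ : ℝ) : ℂ) * Complex.I) - ξ‖ := by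
      have := mul_le_mul_of_nonneg_left htri (by linarith : (0:ℝ) ≤ (p:ℝ))
      linarith [this]
    have h14 : (p:ℝ) * D ≤ 14/3 * δ := by linarith [hchord2, h1r, hsδ]
    nlinarith [hD0, hpR, hδ0]
  -- the exponent shift
  have hne : (Finset.univ : Finset (Fin n)).Nonempty := ⟨⟨0, hn⟩, Finset.mem_univ _⟩
  set M : ℤ := min 0 (Finset.univ.inf' hne a) with hMdef
  have hM0 : M ≤ 0 := min_le_left _ _
  have hMa : ∀ i, M ≤ a i := fun i =>
    le_trans (min_le_right _ _) (Finset.inf'_le _ (Finset.mem_univ i))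
  have hMA : -(A:ℤ) ≤ M := by
    rw [hMdef]
    refine le_min (by simp) (Finset.le_inf' _ _ fun i _ => ?_)
    have := (abs_le.1 (hai i)).1
    linarith
  set e : ℕ := (-M).toNat with hedef
  have he : (e:ℤ) = -M := Int.toNat_of_nonneg (by linarith)
  have heA : (e:ℤ) ≤ (A:ℤ) := by rw [he]; linarith
  set K : Fin n → ℕ := fun i => ((e:ℤ) + a i).toNat with hKdef
  have hK : ∀ i, (K i : ℤ) = (e:ℤ) + a i := fun i =>
    Int.toNat_of_nonneg (by have := hMa i; rw [he]; linarith)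
  -- sum bound
  have hsum_bound : (e:ℤ) + ∑ i, (K i : ℤ) ≤ (2*(n:ℤ) - 1) * A := by
    have hKsum : ∑ i, (K i : ℤ) = (∑ i, a i) - n * M := by
      rw [Finset.sum_congr rfl fun i _ => hK i, Finset.sum_add_distrib]
      simp [he, Finset.sum_const, mul_comm]
      ring
    rcases lt_or_ge M 0 with hM | hM
    · -- M < 0, attained
      have hMinf : Finset.univ.inf' hne a = M := by
        rcases le_total 0 (Finset.univ.inf' hne a) with h | h
        · have hz : M = 0 := by rw [hMdef]; exact min_eq_left h
          omega
        · rw [hMdef, min_eq_right h]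
      obtain ⟨i₀, -, hi₀⟩ := Finset.exists_mem_eq_inf' hne a
      have hai₀ : a i₀ = M := by rw [← hi₀, hMinf]
      have hsplit : ∑ i, (K i : ℤ) = ∑ i ∈ Finset.univ.erase i₀, (K i : ℤ) := by
        rw [← Finset.add_sum_erase _ _ (Finset.mem_univ i₀)]
        have : (K i₀ : ℤ) = 0 := by rw [hK, hai₀, he]; ring
        rw [this, zero_add]
      have hbound : ∑ i ∈ Finset.univ.erase i₀, (K i : ℤ) ≤ ((n:ℤ) - 1) * (2*A) := by
        calc ∑ i ∈ Finset.univ.erase i₀, (K i : ℤ)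
            ≤ ∑ _i ∈ Finset.univ.erase i₀, (2*(A:ℤ)) := by
              refine Finset.sum_le_sum fun i _ => ?_
              rw [hK]
              have h1 := (abs_le.1 (hai i)).2
              rw [he]
              linarith [hMA]
          _ = ((n:ℤ) - 1) * (2*A) := by
              rw [Finset.sum_const, Finset.card_erase_of_mem (Finset.mem_univ i₀),
                Finset.card_univ, Fintype.card_fin, nsmul_eq_mul]
              push_cast [Nat.cast_sub hn]
              ring
      rw [hsplit]
      linarith [heA, hbound]
    · -- M = 0
      have hMz : M = 0 := le_antisymm hM0 hM
      have hez : (e:ℤ) = 0 := by rw [he, hMz]; ring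
      have hsum2 : ∑ i, (K i : ℤ) ≤ (n:ℤ) * A := by
        calc ∑ i, (K i : ℤ) ≤ ∑ _i : Fin n, (A:ℤ) := by
              refine Finset.sum_le_sum fun i _ => ?_
              rw [hK, hez, zero_add]
              exact (abs_le.1 (hai i)).2
          _ = (n:ℤ) * A := by simp [Finset.sum_const, Finset.card_univ, mul_comm]
      have hA0 : (0:ℤ) ≤ (A:ℤ) := Int.ofNat_nonneg A
      have hn1 : (1:ℤ) ≤ (n:ℤ) := by exact_mod_cast hn
      have hnA : (0:ℤ) ≤ ((n:ℤ) - 1) * A := mul_nonneg (by linarith) hA0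
      rw [hez]
      linarith [hsum2]
  -- final assembly
  have hαabs1 : ‖α‖ ≤ 1 := by rw [habs]; exact hr1
  have hξe : ∀ (z : ℂ), z ≠ 0 → z ^ e * (1 + ∑ i, z ^ (a i)) = z ^ e + ∑ i, z ^ (K i) := by
    intro z hz
    rw [mul_add, mul_one, Finset.mul_sum]
    congr 1
    refine Finset.sum_congr rfl fun i _ => ?_
    rw [← zpow_natCast z e, ← zpow_add₀ hz, ← hK i, zpow_natCast]
  have h0 : (α:ℂ) ^ e + ∑ i, α ^ (K i) = 0 := by rw [← hξe α hα0, hroot, mul_zero]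
  have key : ξ ^ e + ∑ i, ξ ^ (K i)
      = (ξ ^ e - α ^ e) + ∑ i, (ξ ^ (K i) - α ^ (K i)) := by
    rw [Finset.sum_sub_distrib]
    linear_combination h0
  have habsξe : ‖ξ ^ e‖ = 1 := by rw [norm_pow, habsξ, one_pow]
  have hnR : (1:ℝ) ≤ (n:ℝ) := by exact_mod_cast hn
  have hAR : (0:ℝ) ≤ (A:ℝ) := Nat.cast_nonneg A
  have hcastsum : (e:ℝ) + ∑ i, (K i : ℝ) ≤ (2*(n:ℝ) - 1) * A := by exact_mod_cast hsum_bound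
  calc ‖1 + ∑ i, ξ ^ (a i)‖
      = ‖ξ ^ e‖ * ‖1 + ∑ i, ξ ^ (a i)‖ := by rw [habsξe, one_mul]
    _ = ‖ξ ^ e * (1 + ∑ i, ξ ^ (a i))‖ := (norm_mul _ _).symm
    _ = ‖(ξ ^ e - α ^ e) + ∑ i, (ξ ^ (K i) - α ^ (K i))‖ := by
        rw [hξe ξ hξ0, key]
    _ ≤ ‖ξ ^ e - α ^ e‖ + ∑ i, ‖ξ ^ (K i) - α ^ (K i)‖ := by
        refine le_trans (norm_add_le _ _) ?_
        gcongr
        exact norm_sum_le _ _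
    _ ≤ (e:ℝ) * D + ∑ i, (K i : ℝ) * D := by
        refine add_le_add ?_ (Finset.sum_le_sum fun i _ => ?_)
        · rw [hDdef]; exact aux3 ξ α habsξ.le hαabs1 e
        · rw [hDdef]; exact aux3 ξ α habsξ.le hαabs1 (K i)
    _ = ((e:ℝ) + ∑ i, (K i : ℝ)) * D := by rw [add_mul, Finset.sum_mul]
    _ ≤ ((2*(n:ℝ) - 1) * A) * D := mul_le_mul_of_nonneg_right hcastsum hD0
    _ ≤ ((2*(n:ℝ) - 1) * A) * (7/3 * δ) :=
        mul_le_mul_of_nonneg_left hD (mul_nonneg (by linarith) hAR)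
    _ ≤ 5 * n * A * δ := by
        have hAδ : (0:ℝ) ≤ (A:ℝ) * δ := mul_nonneg hAR hδ0
        nlinarith [hAδ, hnR]
end

section
/- Let b ≥ 0 be an integer, ψ ∈ C^b(ℝ) and g ∈ C^b(ℝⁿ) with finite C^b-norms |ψ|_{C^b} and |g|_{C^b}. Then the composition ψ∘g lies in C^b(ℝⁿ) and |ψ∘g|_{C^b} ≤ 2^{b(b−1)/2} · |ψ|_{C^b} · max{1, |g|_{C^b}}^b. -/
/-- Iterated partial derivative of `g : ℝⁿ → ℝ` along a list of coordinate
directions. -/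
noncomputable def partialIter {n : ℕ} : List (Fin n) → ((Fin n → ℝ) → ℝ) → ((Fin n → ℝ) → ℝ)
  | [] => id
  | j :: l => fun g x => fderiv ℝ (partialIter l g) x (Pi.single j 1)

section Aux

variable {n b : ℕ}

lemma partialIter_contDiff {g : (Fin n → ℝ) → ℝ} (hg : ContDiff ℝ b g)
    (l : List (Fin n)) (hl : l.length ≤ b) :
    ContDiff ℝ ((b - l.length : ℕ)) (partialIter l g) := by
  induction l with
  | nil => simpa [partialIter] using hg
  | cons j l ih =>
    have hl' : l.length < b := by simpa using hl
    have h1 := ih hl'.le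
    have heq : (b - (j :: l).length : ℕ) + 1 = b - l.length := by
      simp only [List.length_cons]; omega
    have h2 : ContDiff ℝ ((b - (j :: l).length : ℕ)) (fderiv ℝ (partialIter l g)) := by
      apply h1.fderiv_right
      exact_mod_cast heq.le
    show ContDiff ℝ _ fun x => fderiv ℝ (partialIter l g) x (Pi.single j 1)
    exact h2.clm_apply contDiff_const

lemma partialIter_differentiable {g : (Fin n → ℝ) → ℝ} (hg : ContDiff ℝ b g)
    (l : List (Fin n)) (hl : l.length < b) :
    Differentiable ℝ (partialIter l g) := by
  apply (partialIter_contDiff hg l hl.le).differentiable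
  exact_mod_cast (by omega : b - l.length ≠ 0)

lemma iteratedDeriv_contDiff {ψ : ℝ → ℝ} (hψ : ContDiff ℝ b ψ) {m : ℕ} (hm : m ≤ b) :
    ContDiff ℝ ((b - m : ℕ)) (iteratedDeriv m ψ) := by
  rw [iteratedDeriv_eq_iterate]
  apply ContDiff.iterate_deriv' (b - m) m
  have : b - m + m = b := by omega
  rw [this]; exact hψ

lemma comp_iter_differentiable {ψ : ℝ → ℝ} {g : (Fin n → ℝ) → ℝ}
    (hψ : ContDiff ℝ b ψ) (hg : ContDiff ℝ b g) {m : ℕ} (hm : m < b) :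
    Differentiable ℝ (fun x => iteratedDeriv m ψ (g x)) := by
  have h1 : ContDiff ℝ ((b - m : ℕ)) (iteratedDeriv m ψ) := iteratedDeriv_contDiff hψ hm.le
  have h2 : ContDiff ℝ ((b - m : ℕ)) g := hg.of_le (by exact_mod_cast (by omega : b - m ≤ b))
  exact (h1.comp h2).differentiable (by exact_mod_cast (by omega : b - m ≠ 0))

lemma fderiv_real_comp {h : ℝ → ℝ} {u : (Fin n → ℝ) → ℝ} {x : Fin n → ℝ} {v : Fin n → ℝ}
    (hh : DifferentiableAt ℝ h (u x)) (hu : DifferentiableAt ℝ u x) :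
    fderiv ℝ (fun y => h (u y)) x v = deriv h (u x) * fderiv ℝ u x v := by
  have hc := fderiv_comp x hh hu
  rw [show (fun y => h (u y)) = h ∘ u from rfl, hc]
  simp only [ContinuousLinearMap.coe_comp', Function.comp_apply]
  have hv : fderiv ℝ u x v = (fderiv ℝ u x v) • (1 : ℝ) := by simp
  rw [hv, (fderiv ℝ h (u x)).map_smul]
  simp [fderiv_apply_one_eq_deriv, mul_comm]

/-- One step of the product/chain rule bookkeeping on the blocks. -/
def bump (j : Fin n) : List (List (Fin n)) → List (List (List (Fin n)))
  | [] => []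
  | L :: Ls => ((j :: L) :: Ls) :: (bump j Ls).map (L :: ·)

def stepT (j : Fin n) (T : ℕ × List (List (Fin n))) : List (ℕ × List (List (Fin n))) :=
  (T.1 + 1, [j] :: T.2) :: (bump j T.2).map fun Ls => (T.1, Ls)

def dTerms : List (Fin n) → List (ℕ × List (List (Fin n)))
  | [] => [(0, ([] : List (List (Fin n))))]
  | j :: l => (dTerms l).flatMap (stepT j)

lemma bump_length (j : Fin n) : ∀ (Ls : List (List (Fin n))), (bump j Ls).length = Ls.length
  | [] => rfl
  | L :: Ls => by simp [bump, bump_length j Ls]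

lemma mem_bump_length (j : Fin n) {Ls : List (List (Fin n))} {Ls' : List (List (Fin n))}
    (h : Ls' ∈ bump j Ls) : Ls'.length = Ls.length := by
  induction Ls generalizing Ls' with
  | nil => simp [bump] at h
  | cons L Ls ih =>
    simp only [bump, List.mem_cons, List.mem_map] at h
    rcases h with rfl | ⟨Ls'', hmem, rfl⟩
    · simp
    · simp [ih hmem]

lemma mem_bump_blocks (j : Fin n) {k : ℕ} {Ls : List (List (Fin n))}
    (hk : ∀ L ∈ Ls, L.length ≤ k) {Ls' : List (List (Fin n))}
    (h : Ls' ∈ bump j Ls) : ∀ L ∈ Ls', L.length ≤ k + 1 := by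
  induction Ls generalizing Ls' with
  | nil => simp [bump] at h
  | cons L Ls ih =>
    simp only [bump, List.mem_cons, List.mem_map] at h
    rcases h with rfl | ⟨Ls'', hmem, rfl⟩
    · intro M hM
      rcases List.mem_cons.1 hM with rfl | hM
      · simpa using Nat.add_le_add_right (hk L (by simp)) 1
      · exact (hk M (by simp [hM])).trans (by omega)
    · intro M hM
      rcases List.mem_cons.1 hM with rfl | hM
      · exact (hk M (by simp)).trans (by omega)
      · exact ih (fun L hL => hk L (by simp [hL])) hmem M hM

lemma dTerms_good : ∀ (l : List (Fin n)), ∀ T ∈ dTerms l,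
    T.1 ≤ l.length ∧ T.2.length ≤ l.length ∧ ∀ L ∈ T.2, L.length ≤ l.length
  | [] => by simp [dTerms]
  | j :: l => by
    intro T hT
    simp only [dTerms, List.mem_flatMap] at hT
    obtain ⟨T', hT', hmem⟩ := hT
    obtain ⟨h1, h2, h3⟩ := dTerms_good l T' hT'
    simp only [stepT, List.mem_cons, List.mem_map] at hmem
    rcases hmem with rfl | ⟨Ls, hLs, rfl⟩
    · refine ⟨by simpa using h1, by simpa using h2, ?_⟩
      intro L hL
      rcases List.mem_cons.1 hL with rfl | hL
      · simp
      · exact (h3 L hL).trans (by simp)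
    · exact ⟨h1.trans (by simp), by simp [mem_bump_length j hLs]; omega,
        fun L hL => by simpa using mem_bump_blocks j h3 hLs L hL⟩

lemma dTerms_count : ∀ (l : List (Fin n)),
    (dTerms l).length ≤ 2 ^ (∑ i ∈ Finset.range l.length, i)
  | [] => by simp [dTerms]
  | j :: l => by
    have ih := dTerms_count l
    have hlen : ∀ T ∈ dTerms l, (stepT j T).length ≤ 2 ^ l.length := by
      intro T hT
      have h2 := (dTerms_good l T hT).2.1
      have he : (stepT j T).length = 1 + T.2.length := by
        simp [stepT, bump_length]; omega
      rw [he]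
      calc 1 + T.2.length ≤ 1 + l.length := by omega
        _ ≤ 2 ^ l.length := by have : l.length < 2 ^ l.length := Nat.lt_two_pow_self; omega
    calc (dTerms (j :: l)).length
        = ((dTerms l).map fun T => (stepT j T).length).sum := by
          simp [dTerms, List.length_flatMap, Function.comp_def]
      _ ≤ ((dTerms l).map fun T => (stepT j T).length).length • 2 ^ l.length := by
          apply List.sum_le_card_nsmul
          intro x hx
          simp only [List.mem_map] at hx
          obtain ⟨T, hT, rfl⟩ := hx
          exact hlen T hT
      _ = (dTerms l).length * 2 ^ l.length := by simp [smul_eq_mul]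
      _ ≤ 2 ^ (∑ i ∈ Finset.range l.length, i) * 2 ^ l.length :=
          Nat.mul_le_mul_right _ ih
      _ = 2 ^ (∑ i ∈ Finset.range (l.length + 1), i) := by
          rw [Finset.sum_range_succ, pow_add]
      _ = _ := by simp

noncomputable def prodFn (g : (Fin n → ℝ) → ℝ) (Ls : List (List (Fin n))) (x : Fin n → ℝ) : ℝ :=
  (Ls.map fun L => partialIter L g x).prod

noncomputable def tVal (ψ : ℝ → ℝ) (g : (Fin n → ℝ) → ℝ) (T : ℕ × List (List (Fin n)))
    (x : Fin n → ℝ) : ℝ :=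
  iteratedDeriv T.1 ψ (g x) * prodFn g T.2 x

lemma prodFn_nil (g : (Fin n → ℝ) → ℝ) : prodFn g [] = fun _ => 1 := rfl

lemma prodFn_cons (g : (Fin n → ℝ) → ℝ) (L : List (Fin n)) (Ls : List (List (Fin n))) :
    prodFn g (L :: Ls) = fun x => partialIter L g x * prodFn g Ls x := by
  funext x; simp [prodFn]

lemma prodFn_differentiable {g : (Fin n → ℝ) → ℝ} (hg : ContDiff ℝ b g)
    {Ls : List (List (Fin n))} (hLs : ∀ L ∈ Ls, L.length < b) :
    Differentiable ℝ (prodFn g Ls) := by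
  induction Ls with
  | nil => rw [prodFn_nil]; exact differentiable_const 1
  | cons L Ls ih =>
    rw [prodFn_cons]
    exact (partialIter_differentiable hg L (hLs L (by simp))).mul
      (ih fun L' hL' => hLs L' (by simp [hL']))

lemma tVal_differentiable {ψ : ℝ → ℝ} {g : (Fin n → ℝ) → ℝ}
    (hψ : ContDiff ℝ b ψ) (hg : ContDiff ℝ b g) {T : ℕ × List (List (Fin n))}
    (h1 : T.1 < b) (h2 : ∀ L ∈ T.2, L.length < b) :
    Differentiable ℝ (tVal ψ g T) :=
  (comp_iter_differentiable hψ hg h1).mul (prodFn_differentiable hg h2)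

lemma fderiv_prodFn {g : (Fin n → ℝ) → ℝ} (hg : ContDiff ℝ b g) (j : Fin n)
    {Ls : List (List (Fin n))} (hLs : ∀ L ∈ Ls, L.length < b) (x : Fin n → ℝ) :
    fderiv ℝ (prodFn g Ls) x (Pi.single j 1) =
      ((bump j Ls).map fun Ls' => prodFn g Ls' x).sum := by
  induction Ls with
  | nil =>
    rw [prodFn_nil]
    simp [bump]
  | cons L Ls ih =>
    have hL : Differentiable ℝ (partialIter L g) :=
      partialIter_differentiable hg L (hLs L (by simp))
    have hP : Differentiable ℝ (prodFn g Ls) :=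
      prodFn_differentiable hg fun L' hL' => hLs L' (by simp [hL'])
    rw [prodFn_cons]
    rw [fderiv_fun_mul (hL x) (hP x)]
    simp only [ContinuousLinearMap.add_apply, ContinuousLinearMap.smul_apply, smul_eq_mul]
    rw [ih fun L' hL' => hLs L' (by simp [hL'])]
    have hstep : fderiv ℝ (partialIter L g) x (Pi.single j 1) = partialIter (j :: L) g x := rfl
    rw [hstep]
    simp only [bump, List.map_cons, List.map_map, List.sum_cons, prodFn_cons]
    have heq : ((bump j Ls).map ((fun Ls' => prodFn g Ls' x) ∘ (L :: ·))).sum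
        = ((bump j Ls).map fun Ls' => partialIter L g x * prodFn g Ls' x).sum := by
      simp [Function.comp_def, prodFn_cons]
    rw [heq, List.sum_map_mul_left]
    ring

lemma fderiv_tVal {ψ : ℝ → ℝ} {g : (Fin n → ℝ) → ℝ}
    (hψ : ContDiff ℝ b ψ) (hg : ContDiff ℝ b g) (j : Fin n)
    {T : ℕ × List (List (Fin n))} (h1 : T.1 < b) (h2 : ∀ L ∈ T.2, L.length < b)
    (x : Fin n → ℝ) :
    fderiv ℝ (tVal ψ g T) x (Pi.single j 1) =
      ((stepT j T).map fun T' => tVal ψ g T' x).sum := by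
  obtain ⟨m, Ls⟩ := T
  simp only at h1 h2
  have hu : Differentiable ℝ (fun x => iteratedDeriv m ψ (g x)) :=
    comp_iter_differentiable hψ hg h1
  have hv : Differentiable ℝ (prodFn g Ls) := prodFn_differentiable hg h2
  have hrw : tVal ψ g (m, Ls) = fun x => (fun x => iteratedDeriv m ψ (g x)) x * prodFn g Ls x :=
    rfl
  rw [hrw, fderiv_fun_mul (hu x) (hv x)]
  simp only [ContinuousLinearMap.add_apply, ContinuousLinearMap.smul_apply, smul_eq_mul]
  have hψd : DifferentiableAt ℝ (iteratedDeriv m ψ) (g x) := by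
    have := iteratedDeriv_contDiff hψ h1.le
    exact (this.differentiable (by exact_mod_cast (by omega : b - m ≠ 0))).differentiableAt
  have hgd : DifferentiableAt ℝ g x :=
    (hg.differentiable (by exact_mod_cast (by omega : b ≠ 0))).differentiableAt
  have hcomp : fderiv ℝ (fun y => iteratedDeriv m ψ (g y)) x (Pi.single j 1)
      = iteratedDeriv (m + 1) ψ (g x) * partialIter [j] g x := by
    rw [fderiv_real_comp hψd hgd, ← iteratedDeriv_succ]
    rfl
  rw [hcomp, fderiv_prodFn hg j h2 x]
  simp only [stepT, List.map_cons, List.map_map, List.sum_cons]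
  have h3 : tVal ψ g (m + 1, [j] :: Ls) x
      = iteratedDeriv (m + 1) ψ (g x) * (partialIter [j] g x * prodFn g Ls x) := by
    simp [tVal, prodFn_cons]
  have h4 : ((bump j Ls).map ((fun T' => tVal ψ g T' x) ∘ fun Ls' => (m, Ls'))).sum
      = ((bump j Ls).map fun Ls' => iteratedDeriv m ψ (g x) * prodFn g Ls' x).sum := by
    simp [Function.comp_def, tVal]
  rw [h3, h4, List.sum_map_mul_left]
  ring

lemma differentiable_list_sum {ι : Type*} (ts : List ι) (F : ι → (Fin n → ℝ) → ℝ)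
    (hF : ∀ T ∈ ts, Differentiable ℝ (F T)) :
    Differentiable ℝ (fun y => (ts.map fun T => F T y).sum) := by
  induction ts with
  | nil => simp
  | cons T ts ih =>
    simp only [List.map_cons, List.sum_cons]
    exact (hF T (by simp)).add (ih fun T' hT' => hF T' (by simp [hT']))

lemma fderiv_list_sum {ι : Type*} (ts : List ι) (F : ι → (Fin n → ℝ) → ℝ)
    (hF : ∀ T ∈ ts, Differentiable ℝ (F T)) (x v : Fin n → ℝ) :
    fderiv ℝ (fun y => (ts.map fun T => F T y).sum) x v
      = (ts.map fun T => fderiv ℝ (F T) x v).sum := by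
  induction ts with
  | nil => simp
  | cons T ts ih =>
    simp only [List.map_cons, List.sum_cons]
    have h1 : DifferentiableAt ℝ (F T) x := (hF T (by simp)).differentiableAt
    have h2 : DifferentiableAt ℝ (fun y => (ts.map fun T => F T y).sum) x :=
      (differentiable_list_sum ts F fun T' hT' => hF T' (by simp [hT'])).differentiableAt
    rw [show (fun y => F T y + (ts.map fun T => F T y).sum)
          = (fun y => F T y + (fun y => (ts.map fun T => F T y).sum) y) from rfl,
      fderiv_fun_add h1 h2]
    simp only [ContinuousLinearMap.add_apply]
    rw [ih fun T' hT' => hF T' (by simp [hT'])]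

lemma dTerms_eval {ψ : ℝ → ℝ} {g : (Fin n → ℝ) → ℝ}
    (hψ : ContDiff ℝ b ψ) (hg : ContDiff ℝ b g) :
    ∀ l : List (Fin n), l.length ≤ b → ∀ x,
      partialIter l (ψ ∘ g) x = ((dTerms l).map fun T => tVal ψ g T x).sum := by
  intro l
  induction l with
  | nil =>
    intro _ x
    simp [partialIter, dTerms, tVal, prodFn, Function.comp]
  | cons j l ih =>
    intro hl x
    have hl' : l.length < b := by simpa using hl
    have hfun : partialIter l (ψ ∘ g) = fun y => ((dTerms l).map fun T => tVal ψ g T y).sum := by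
      funext y; exact ih hl'.le y
    have hdiff : ∀ T ∈ dTerms l, Differentiable ℝ (tVal ψ g T) := by
      intro T hT
      obtain ⟨g1, g2, g3⟩ := dTerms_good l T hT
      exact tVal_differentiable hψ hg (lt_of_le_of_lt g1 hl')
        fun L hL => lt_of_le_of_lt (g3 L hL) hl'
    rw [show partialIter (j :: l) (ψ ∘ g) x
        = fderiv ℝ (partialIter l (ψ ∘ g)) x (Pi.single j 1) from rfl, hfun]
    rw [fderiv_list_sum (dTerms l) (tVal ψ g) hdiff x (Pi.single j 1)]
    have hterm : ∀ T ∈ dTerms l, fderiv ℝ (tVal ψ g T) x (Pi.single j 1)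
        = ((stepT j T).map fun T' => tVal ψ g T' x).sum := by
      intro T hT
      obtain ⟨g1, g2, g3⟩ := dTerms_good l T hT
      exact fderiv_tVal hψ hg j (lt_of_le_of_lt g1 hl')
        (fun L hL => lt_of_le_of_lt (g3 L hL) hl') x
    rw [List.map_congr_left hterm]
    rw [show dTerms (j :: l) = (dTerms l).flatMap (stepT j) from rfl]
    simp [List.flatMap, List.sum_flatten, List.map_map, Function.comp_def]

lemma abs_list_prod_le {M : ℝ} (hM : 1 ≤ M) :
    ∀ (xs : List ℝ), (∀ a ∈ xs, |a| ≤ M) → |xs.prod| ≤ M ^ xs.length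
  | [], _ => by simp
  | a :: xs, h => by
    have h1 : |a| ≤ M := h a (by simp)
    have h2 : |xs.prod| ≤ M ^ xs.length :=
      abs_list_prod_le hM xs fun a' ha' => h a' (by simp [ha'])
    calc |(a :: xs).prod| = |a| * |xs.prod| := by simp [abs_mul]
      _ ≤ M * M ^ xs.length := by
          apply mul_le_mul h1 h2 (abs_nonneg _) (by linarith)
      _ = M ^ (a :: xs).length := by simp [pow_succ]; ring

lemma abs_list_sum_le {C : ℝ} :
    ∀ (xs : List ℝ), (∀ a ∈ xs, |a| ≤ C) → |xs.sum| ≤ xs.length * C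
  | [], _ => by simp
  | a :: xs, h => by
    have h1 : |a| ≤ C := h a (by simp)
    have h2 : |xs.sum| ≤ xs.length * C :=
      abs_list_sum_le xs fun a' ha' => h a' (by simp [ha'])
    calc |(a :: xs).sum| ≤ |a| + |xs.sum| := by simp [abs_add_le]
      _ ≤ C + xs.length * C := by linarith
      _ = (a :: xs).length * C := by simp; ring

end Aux

/-- Let b ≥ 0, ψ ∈ C^b(ℝ) and g ∈ C^b(ℝⁿ) with finite C^b-norms
(bounded by Mψ and Mg respectively: all derivatives up to order b are bounded).
Then ψ∘g ∈ C^b(ℝⁿ) and |ψ∘g|_{C^b} ≤ 2^{b(b−1)/2}·|ψ|_{C^b}·max{1,|g|_{C^b}}^b. -/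
theorem stmt_13 {n b : ℕ} (ψ : ℝ → ℝ) (g : (Fin n → ℝ) → ℝ)
    (hψ : ContDiff ℝ b ψ) (hg : ContDiff ℝ b g)
    (Mψ Mg : ℝ)
    (hMψ : ∀ i ≤ b, ∀ t : ℝ, |iteratedDeriv i ψ t| ≤ Mψ)
    (hMg : ∀ l : List (Fin n), l.length ≤ b → ∀ x, |partialIter l g x| ≤ Mg) :
    ContDiff ℝ b (ψ ∘ g) ∧
    ∀ l : List (Fin n), l.length ≤ b → ∀ x,
      |partialIter l (ψ ∘ g) x| ≤
        2 ^ (b * (b - 1) / 2) * Mψ * max 1 Mg ^ b := by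
  have hMψ0 : 0 ≤ Mψ := le_trans (abs_nonneg _) (hMψ 0 (Nat.zero_le b) 0)
  set M : ℝ := max 1 Mg with hM
  have hM1 : 1 ≤ M := le_max_left _ _
  have hM0 : 0 ≤ M := by linarith
  refine ⟨hψ.comp hg, ?_⟩
  intro l hl x
  rw [dTerms_eval hψ hg l hl x]
  -- bound each term
  have hterm : ∀ T ∈ dTerms l, |tVal ψ g T x| ≤ Mψ * M ^ b := by
    intro T hT
    obtain ⟨g1, g2, g3⟩ := dTerms_good l T hT
    have hψb : |iteratedDeriv T.1 ψ (g x)| ≤ Mψ := hMψ T.1 (g1.trans hl) (g x)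
    have hprod : |prodFn g T.2 x| ≤ M ^ T.2.length := by
      apply abs_list_prod_le hM1 _ ?_ |>.trans_eq (by simp [prodFn])
      intro a ha
      simp only [List.mem_map] at ha
      obtain ⟨L, hL, rfl⟩ := ha
      exact (hMg L ((g3 L hL).trans hl) x).trans (le_max_right _ _)
    have hprod' : |prodFn g T.2 x| ≤ M ^ b :=
      hprod.trans (pow_le_pow_right₀ hM1 (g2.trans hl))
    calc |tVal ψ g T x| = |iteratedDeriv T.1 ψ (g x)| * |prodFn g T.2 x| := by
          simp [tVal, abs_mul]
      _ ≤ Mψ * M ^ b := mul_le_mul hψb hprod' (abs_nonneg _) hMψ0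
  have hsum : |((dTerms l).map fun T => tVal ψ g T x).sum|
      ≤ ((dTerms l).length : ℝ) * (Mψ * M ^ b) := by
    have := abs_list_sum_le (C := Mψ * M ^ b) ((dTerms l).map fun T => tVal ψ g T x) ?_
    · simpa using this
    · intro a ha
      simp only [List.mem_map] at ha
      obtain ⟨T, hT, rfl⟩ := ha
      exact hterm T hT
  refine hsum.trans ?_
  have hc1 : (dTerms l).length ≤ 2 ^ (b * (b - 1) / 2) := by
    refine (dTerms_count l).trans ?_
    apply Nat.pow_le_pow_right (by norm_num)
    rw [Finset.sum_range_id]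
    exact Nat.div_le_div_right (Nat.mul_le_mul hl (Nat.sub_le_sub_right hl 1))
  have hc1' : ((dTerms l).length : ℝ) ≤ (2 : ℝ) ^ (b * (b - 1) / 2) := by
    exact_mod_cast hc1
  have hMb : 0 ≤ Mψ * M ^ b := mul_nonneg hMψ0 (pow_nonneg hM0 b)
  calc ((dTerms l).length : ℝ) * (Mψ * M ^ b)
      ≤ (2 : ℝ) ^ (b * (b - 1) / 2) * (Mψ * M ^ b) :=
        mul_le_mul_of_nonneg_right hc1' hMb
    _ = 2 ^ (b * (b - 1) / 2) * Mψ * M ^ b := by ring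
end

section
/- Let p be a prime, f an odd prime dividing p − 1, G ⊂ 𝔽_p^× the subgroup of order f, and A₁,…,A_k ∈ 𝔽_p^× a complete set of representatives of 𝔽_p^×/G, where k = (p−1)/f. Then #{(x₁,…,x_k) ∈ G^k : A₁x₁ + ⋯ + A_k x_k = 0} − f^k/p = ((p−1)/p)·Δ, where Δ = ∏_{t ∈ 𝔽_p^×/G} (Σ_{g∈G} ζ^{tg}) with ζ = e^{2πi/p}. -/
open Finset

/-- Let p be a prime, f an odd prime dividing p − 1,
G ⊂ 𝔽_p^× the subgroup of order f, k = (p−1)/f, and A₁,…,A_k a complete set of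
representatives of 𝔽_p^×/G. Then
`#{x ∈ G^k : A₁x₁ + ⋯ + A_kx_k = 0} − f^k/p = ((p−1)/p)·Δ`, where
`Δ = ∏_{t ∈ 𝔽_p^×/G} (Σ_{g∈G} ζ^{tg})` with ζ = e^{2πi/p}. -/
theorem stmt_16 (p f : ℕ) [hp : Fact p.Prime] (hf : f.Prime) (hodd : Odd f)
    (hdvd : f ∣ p - 1)
    (G : Subgroup (ZMod p)ˣ) [Fintype G] (hG : Nat.card G = f)
    (k : ℕ) (hk : k = (p - 1) / f)
    (A : Fin k → (ZMod p)ˣ)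
    (hA : Function.Bijective (fun i : Fin k => (QuotientGroup.mk (A i) : (ZMod p)ˣ ⧸ G))) :
    (Nat.card {x : Fin k → G //
        ∑ i : Fin k, ((A i : (ZMod p)ˣ) : ZMod p) * (((x i : (ZMod p)ˣ)) : ZMod p) = 0} : ℂ)
      - (f : ℂ) ^ k / p =
    (((p : ℂ) - 1) / p) *
      ∏ i : Fin k, ∑ g : G,
        Complex.exp (2 * Real.pi * Complex.I *
          (((A i * (g : (ZMod p)ˣ) : (ZMod p)ˣ) : ZMod p).val : ℕ) / p) := by
  classical
  have hp0 : (p : ℂ) ≠ 0 := Nat.cast_ne_zero.mpr hp.out.pos.ne'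
  set ψ : AddChar (ZMod p) ℂ := ZMod.stdAddChar with hψ
  -- ψ of a finite sum is a product
  have hmap : ∀ (F : Fin k → ZMod p), ψ (∑ i, F i) = ∏ i, ψ (F i) := by
    intro F
    induction (Finset.univ : Finset (Fin k)) using Finset.induction with
    | empty => simp
    | insert _ _ h ih => simp [Finset.sum_insert h, Finset.prod_insert h, AddChar.map_add_eq_mul, ih]
  -- the coset sum
  set Fu : (ZMod p)ˣ → ℂ :=
    fun B => ∑ g : G, ψ ((B : ZMod p) * ((g : (ZMod p)ˣ) : ZMod p)) with hFu
  have hFcoset : ∀ B C : (ZMod p)ˣ,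
      (QuotientGroup.mk B : (ZMod p)ˣ ⧸ G) = QuotientGroup.mk C → Fu B = Fu C := by
    intro B C h
    rw [QuotientGroup.eq] at h
    refine Fintype.sum_equiv (Equiv.mulLeft ((⟨B⁻¹ * C, h⟩ : G)⁻¹)) _ _ ?_
    intro x
    have hx : (B : (ZMod p)ˣ) * ↑x = ↑C * ↑((⟨B⁻¹ * C, h⟩ : G)⁻¹ * x) := by
      push_cast
      group
    have h2 := congrArg (fun u : (ZMod p)ˣ => ψ (u : ZMod p)) hx
    exact h2
  set Δ : ℂ := ∏ i : Fin k, Fu (A i) with hΔ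
  have keyu : ∀ u : (ZMod p)ˣ, (∏ i : Fin k, Fu (u * A i)) = Δ := by
    intro u
    set eqv : Fin k ≃ ((ZMod p)ˣ ⧸ G) := Equiv.ofBijective _ hA with heqv
    set σ : Fin k ≃ Fin k :=
      eqv.trans ((Equiv.mulLeft (QuotientGroup.mk u)).trans eqv.symm) with hσ
    have hστ : ∀ i, (QuotientGroup.mk (A (σ i)) : (ZMod p)ˣ ⧸ G) = QuotientGroup.mk (u * A i) := by
      intro i
      have h1 : eqv (σ i) = QuotientGroup.mk u * eqv i := by
        simp [hσ]
      have h2 : eqv (σ i) = QuotientGroup.mk (A (σ i)) := rfl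
      have h3 : eqv i = QuotientGroup.mk (A i) := rfl
      rw [h2, h3] at h1
      rw [h1, QuotientGroup.mk_mul]
    calc ∏ i : Fin k, Fu (u * A i) = ∏ i : Fin k, Fu (A (σ i)) := by
          refine Finset.prod_congr rfl fun i _ => ?_
          exact (hFcoset _ _ (hστ i)).symm
      _ = Δ := by rw [hΔ]; exact Equiv.prod_comp σ (fun j => Fu (A j))
  -- the counting identity
  set S : (Fin k → G) → ZMod p :=
    fun x => ∑ i : Fin k, ((A i : (ZMod p)ˣ) : ZMod p) * (((x i : (ZMod p)ˣ)) : ZMod p) with hS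
  have hN : (Nat.card {x : Fin k → G // S x = 0} : ℂ) * p
      = ∑ x : Fin k → G, ∑ t : ZMod p, ψ (t * S x) := by
    have horth : ∀ x : Fin k → G,
        (∑ t : ZMod p, ψ (t * S x)) = if S x = 0 then (p : ℂ) else 0 := by
      intro x
      rw [AddChar.sum_mulShift (S x) (ZMod.isPrimitive_stdAddChar p)]
      simp [ZMod.card]
    simp_rw [horth]
    rw [Finset.sum_ite, Finset.sum_const, Finset.sum_const_zero, add_zero,
      Nat.card_eq_fintype_card, Fintype.card_subtype]
    simp [mul_comm]
  -- swap and factor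
  have hswap : (∑ x : Fin k → G, ∑ t : ZMod p, ψ (t * S x))
      = ∑ t : ZMod p, ∏ i : Fin k,
          ∑ g : G, ψ (t * (((A i : (ZMod p)ˣ) : ZMod p) * ((g : (ZMod p)ˣ) : ZMod p))) := by
    rw [Finset.sum_comm]
    refine Finset.sum_congr rfl fun t _ => ?_
    rw [Fintype.prod_sum (fun i (g : G) =>
      ψ (t * (((A i : (ZMod p)ˣ) : ZMod p) * ((g : (ZMod p)ˣ) : ZMod p))))]
    refine Finset.sum_congr rfl fun x _ => ?_
    rw [hS, Finset.mul_sum, hmap]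
  set H : ZMod p → ℂ := fun t => ∏ i : Fin k,
      ∑ g : G, ψ (t * (((A i : (ZMod p)ˣ) : ZMod p) * ((g : (ZMod p)ˣ) : ZMod p))) with hH
  have hH0 : H 0 = (f : ℂ) ^ k := by
    have hcardG : (Fintype.card G : ℂ) = (f : ℂ) := by
      rw [← Nat.card_eq_fintype_card, hG]
    simp [hH, hcardG]
  have hHu : ∀ u : (ZMod p)ˣ, H (u : ZMod p) = Δ := by
    intro u
    rw [← keyu u]
    refine Finset.prod_congr rfl fun i _ => ?_
    rw [hFu]
    refine Finset.sum_congr rfl fun g _ => ?_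
    congr 1
    rw [Units.val_mul, mul_assoc]
  have hsplit : (∑ t : ZMod p, H t) = (f : ℂ) ^ k + ((p : ℂ) - 1) * Δ := by
    rw [← Finset.add_sum_erase Finset.univ H (Finset.mem_univ (0 : ZMod p)), hH0]
    congr 1
    have herase : (∑ t ∈ Finset.univ.erase (0 : ZMod p), H t)
        = ∑ u : (ZMod p)ˣ, H (u : ZMod p) := by
      refine (Finset.sum_bij (fun (u : (ZMod p)ˣ) (_ : u ∈ Finset.univ) => (u : ZMod p))
        (fun u _ => Finset.mem_erase.mpr ⟨u.ne_zero, Finset.mem_univ _⟩)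
        (fun a _ b _ hab => Units.ext hab)
        (fun t ht => ?_) (fun u _ => rfl)).symm
      obtain ⟨ht0, -⟩ := Finset.mem_erase.mp ht
      exact ⟨Units.mk0 t ht0, Finset.mem_univ _, rfl⟩
    rw [herase]
    simp_rw [hHu]
    rw [Finset.sum_const, Finset.card_univ, ZMod.card_units_eq_totient,
      Nat.totient_prime hp.out, nsmul_eq_mul]
    congr 1
    rw [Nat.cast_sub hp.out.one_le, Nat.cast_one]
  -- identify Δ with the RHS product
  have hΔrhs : Δ = ∏ i : Fin k, ∑ g : G,
      Complex.exp (2 * Real.pi * Complex.I *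
        (((A i * (g : (ZMod p)ˣ) : (ZMod p)ˣ) : ZMod p).val : ℕ) / p) := by
    refine Finset.prod_congr rfl fun i _ => Finset.sum_congr rfl fun g _ => ?_
    rw [hψ, ZMod.stdAddChar_apply, ZMod.toCircle_apply, ← Units.val_mul]
  -- put it together
  have hfinal : (Nat.card {x : Fin k → G // S x = 0} : ℂ) * p
      = (f : ℂ) ^ k + ((p : ℂ) - 1) * Δ := by
    rw [hN, hswap, ← hsplit]
  rw [← hΔrhs]
  have : (Nat.card {x : Fin k → G // S x = 0} : ℂ) = (Nat.card {x : Fin k → G //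
      ∑ i : Fin k, ((A i : (ZMod p)ˣ) : ZMod p) * (((x i : (ZMod p)ˣ)) : ZMod p) = 0} : ℂ) := rfl
  rw [← this, (eq_div_iff hp0).mpr hfinal]
  ring
end
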